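/- Let f be a C¹ time-varying vector field on E = EuclideanSpace ℝ (Fin n) with flow φ that is differentiable in the initial state, with derivative Dφ(t;t₀,x) whose directional curves are lifted solutions of the complete lift of f. Suppose V : ℝ × E × E → ℝ is continuous, satisfies c₁‖y‖^p ≤ V(t,x,y) ≤ c₂‖y‖^p for constants c₁,c₂ > 0 and p ≥ 1, and there is a class K function α such that along every lifted solution (x(·),y(·)) the upper right Dini derivative of t ↦ V(t,x(t),y(t)) is at most −α(V(t,x(t),y(t))) for all t ≥ t₀. Then there exists a class KL function β such that for all x₁,x₂ ∈ E and all t ≥ t₀, ‖φ(t;t₀,x₁) − φ(t;t₀,x₂)‖ ≤ β(‖x₁ − x₂‖, t − t₀) (uniform global incremental asymptotic stability). -/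

import Mathlib

open scoped NNReal
open Filter

noncomputable section

/-- The Euclidean state space. -/
abbrev E (n : ℕ) := EuclideanSpace ℝ (Fin n)

/-- `x` is a solution of `ẋ = f(x,t)` starting at `(t₀, x₀)`. -/
def IsSolution {n : ℕ} (f : E n → ℝ → E n) (t₀ : ℝ) (x₀ : E n) (x : ℝ → E n) : Prop :=
  x t₀ = x₀ ∧ ∀ t, t₀ ≤ t → HasDerivAt x (f (x t) t) t

/-- `(x, y)` is a lifted solution of the complete lift of `f`, starting at `(t₀, x₀, y₀)`:
`ẋ = f(x,t)`, `ẏ = (D_x f(x,t)) y`. -/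
def IsLiftedSolution {n : ℕ} (f : E n → ℝ → E n) (t₀ : ℝ) (x₀ y₀ : E n)
    (x y : ℝ → E n) : Prop :=
  IsSolution f t₀ x₀ x ∧ y t₀ = y₀ ∧
    ∀ t, t₀ ≤ t → HasDerivAt y (fderiv ℝ (fun z => f z t) (x t) (y t)) t

/-- `φ` is a flow for `f`: `φ t₀ t₀ x = x` and `t ↦ φ t t₀ x` solves `ẋ = f(x,t)`. -/
def IsFlow {n : ℕ} (f : E n → ℝ → E n) (φ : ℝ → ℝ → E n → E n) : Prop :=
  ∀ t₀ x, IsSolution f t₀ x (fun t => φ t t₀ x)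

/-- `φ` is differentiable in the initial state with derivative `Dφ`, and the directional
curves `t ↦ Dφ t t₀ x v` are lifted solutions of the complete lift of `f`. -/
def FlowDiffInitial {n : ℕ} (f : E n → ℝ → E n) (φ : ℝ → ℝ → E n → E n)
    (Dφ : ℝ → ℝ → E n → (E n →L[ℝ] E n)) : Prop :=
  (∀ t t₀ x, t₀ ≤ t → HasFDerivAt (fun z => φ t t₀ z) (Dφ t t₀ x) x) ∧
  ∀ t₀ x v, IsLiftedSolution f t₀ x v (fun t => φ t t₀ x) (fun t => Dφ t t₀ x v)

/-- A class `K` function: continuous, strictly increasing, vanishing at `0`. -/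
def ClassK (α : ℝ≥0 → ℝ≥0) : Prop :=
  Continuous α ∧ StrictMono α ∧ α 0 = 0

/-- A class `KL` function: class `K` in the first argument, nonincreasing and tending
to `0` at infinity in the second argument. -/
def ClassKL (β : ℝ≥0 → ℝ≥0 → ℝ≥0) : Prop :=
  (∀ s, ClassK (fun r => β r s)) ∧
  ∀ r, Antitone (fun s => β r s) ∧ Tendsto (fun s => β r s) atTop (nhds 0)

/-- The upper right Dini derivative of `g : ℝ → ℝ` at `t`. -/
def DiniUpper (g : ℝ → ℝ) (t : ℝ) : ℝ :=
  limsup (fun h => (g (t + h) - g t) / h) (nhdsWithin 0 (Set.Ioi (0 : ℝ)))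

/-- Core: if the upper right Dini derivative is `< c ≤ 0` then there are arbitrarily
small right increments along which the slope is `< c`. -/
lemma dini_core (g : ℝ → ℝ) (t c : ℝ) (hc : c ≤ 0) (h : DiniUpper g t < c)
    (δ : ℝ) (hδ : 0 < δ) :
    ∃ h', 0 < h' ∧ h' < δ ∧ g (t + h') < g t + c * h' := by
  set S : Set ℝ := {a | ∀ᶠ h' in nhdsWithin 0 (Set.Ioi (0:ℝ)), (g (t + h') - g t) / h' ≤ a}
    with hSdef
  have hS : DiniUpper g t = sInf S := limsup_eq
  have hne : S.Nonempty := by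
    by_contra h'
    rw [Set.not_nonempty_iff_eq_empty] at h'
    rw [hS, h', Real.sInf_empty] at h
    linarith
  have hbdd : BddBelow S := by
    by_contra h'
    rw [hS, Real.sInf_of_not_bddBelow h'] at h
    linarith
  obtain ⟨a, haS, hac⟩ := (csInf_lt_iff hbdd hne).mp (by rw [← hS]; exact h)
  have h1 : ∀ᶠ h' in nhdsWithin 0 (Set.Ioi (0:ℝ)), h' ∈ Set.Ioi (0:ℝ) :=
    self_mem_nhdsWithin
  have h2 : ∀ᶠ h' in nhdsWithin 0 (Set.Ioi (0:ℝ)), h' < δ :=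
    eventually_nhdsWithin_of_eventually_nhds (gt_mem_nhds hδ)
  have haS' : ∀ᶠ h' in nhdsWithin 0 (Set.Ioi (0:ℝ)), (g (t + h') - g t) / h' ≤ a := haS
  obtain ⟨h', hsl, hpos, hlt⟩ := (haS'.and (h1.and h2)).exists
  have hpos' : (0:ℝ) < h' := Set.mem_Ioi.mp hpos
  refine ⟨h', hpos', hlt, ?_⟩
  have hdiv := (div_le_iff₀ hpos').mp hsl
  nlinarith [mul_lt_mul_of_pos_right hac hpos']

/-- Main comparison engine via the supremum argument. -/
lemma dini_gen (g : ℝ → ℝ) (t₁ t₂ : ℝ) (h12 : t₁ ≤ t₂)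
    (hcont : ContinuousOn g (Set.Icc t₁ t₂)) (c m : ℝ) (hc : c ≤ 0)
    (hm : g t₁ - c * t₁ ≤ m)
    (hdini : ∀ s, t₁ ≤ s → s < t₂ → g s - c * s = m → DiniUpper g s < c) :
    g t₂ - c * t₂ ≤ m := by
  by_contra hcon
  push_neg at hcon
  set K : Set ℝ := {u | u ∈ Set.Icc t₁ t₂ ∧ g u - c * u ≤ m} with hKdef
  have hKne : K.Nonempty := ⟨t₁, ⟨le_refl _, h12⟩, hm⟩
  have hKbdd : BddAbove K := ⟨t₂, fun u hu => hu.1.2⟩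
  have hgc : ContinuousOn (fun u => g u - c * u) (Set.Icc t₁ t₂) :=
    hcont.sub (continuousOn_const.mul continuousOn_id)
  have hKclosed : IsClosed K := by
    have hEq : K = Set.Icc t₁ t₂ ∩ (fun u => g u - c * u) ⁻¹' Set.Iic m := by
      ext u; simp only [hKdef, Set.mem_setOf_eq, Set.mem_inter_iff, Set.mem_preimage,
        Set.mem_Iic]
    rw [hEq]
    exact hgc.preimage_isClosed_of_isClosed isClosed_Icc isClosed_Iic
  have hsK : sSup K ∈ K := hKclosed.csSup_mem hKne hKbdd
  set s := sSup K with hsdef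
  have hs1 : t₁ ≤ s := hsK.1.1
  have hs2 : s ≤ t₂ := hsK.1.2
  have hst2 : s < t₂ := by
    rcases lt_or_eq_of_le hs2 with h | h
    · exact h
    · exfalso; rw [h] at hsK; exact absurd hsK.2 (not_le.mpr hcon)
  have hgt : ∀ u, s < u → u ≤ t₂ → m < g u - c * u := by
    intro u hu1 hu2
    by_contra hh
    push_neg at hh
    exact absurd (le_csSup hKbdd ⟨⟨hs1.trans hu1.le, hu2⟩, hh⟩) (not_le.mpr hu1)
  have hme : g s - c * s = m := by
    refine le_antisymm hsK.2 ?_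
    have htend : Tendsto (fun u => g u - c * u) (nhdsWithin s (Set.Ioc s t₂))
        (nhds (g s - c * s)) := by
      have h1 : ContinuousWithinAt (fun u => g u - c * u) (Set.Icc t₁ t₂) s :=
        hgc s ⟨hs1, hs2⟩
      exact h1.tendsto.mono_left (nhdsWithin_mono s (fun u hu => ⟨hs1.trans hu.1.le, hu.2⟩))
    have hnb : (nhdsWithin s (Set.Ioc s t₂)).NeBot := by
      rw [nhdsWithin_Ioc_eq_nhdsGT hst2]
      infer_instance
    refine ge_of_tendsto htend ?_
    filter_upwards [self_mem_nhdsWithin] with u hu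
    exact (hgt u hu.1 hu.2).le
  obtain ⟨h', hh1, hh2, hh3⟩ := dini_core g s c hc (hdini s hs1 hst2 hme) (t₂ - s)
    (by linarith)
  have hmem : s + h' ∈ K := by
    refine ⟨⟨by linarith, by linarith⟩, ?_⟩
    have e1 : c * (s + h') = c * s + c * h' := by ring
    linarith
  exact absurd (le_csSup hKbdd hmem) (by linarith)

/-- Nonincreasing along the solution. -/
lemma dini_antitone (g : ℝ → ℝ) (a : ℝ) (hcont : ContinuousOn g (Set.Ici a))
    (hnn : ∀ t, a ≤ t → 0 ≤ g t)
    (hdini : ∀ s, a ≤ s → 0 < g s → DiniUpper g s < 0) :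
    ∀ t₁ t₂, a ≤ t₁ → t₁ ≤ t₂ → g t₂ ≤ g t₁ := by
  intro t₁ t₂ ha h12
  by_contra hcon
  push_neg at hcon
  have h2pos : 0 < g t₂ := lt_of_le_of_lt (hnn t₁ ha) hcon
  have key := dini_gen g t₁ t₂ h12
    (hcont.mono (fun u hu => le_trans ha hu.1)) 0 ((g t₁ + g t₂)/2)
    le_rfl (by simp only [zero_mul, sub_zero]; linarith) ?_
  · simp only [zero_mul, sub_zero] at key; linarith
  · intro s hs1 hs2 hms
    apply hdini s (ha.trans hs1)
    have hgs : g s = (g t₁ + g t₂)/2 := by simpa using hms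
    have h0 := hnn t₁ ha
    rw [hgs]; linarith

/-- Linear decay while the Dini derivative is below `-κ`. -/
lemma dini_decay (g : ℝ → ℝ) (a : ℝ) (hcont : ContinuousOn g (Set.Ici a))
    (κ : ℝ) (t : ℝ) (hat : a ≤ t)
    (hdini : ∀ s, a ≤ s → s < t → DiniUpper g s < -κ) (hκ : 0 ≤ κ) :
    g t ≤ g a - κ * (t - a) := by
  have key := dini_gen g a t hat (hcont.mono (fun u hu => hu.1)) (-κ)
    (g a - (-κ) * a) (by linarith) le_rfl (fun s hs1 hs2 _ => hdini s hs1 hs2)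
  have e1 : (-κ) * t = -(κ * t) := by ring
  have e2 : (-κ) * a = -(κ * a) := by ring
  have e3 : κ * (t - a) = κ * t - κ * a := by ring
  linarith

/-- If a continuous Finsler–Lyapunov function `V` with bounds `c₁‖y‖^p ≤ V ≤ c₂‖y‖^p`
satisfies `D⁺V ≤ −α(V)` along lifted solutions for a class `K` function `α`, then the
system is uniformly globally incrementally asymptotically stable: there is a class `KL`
function `β` such that `‖φ(t;t₀,x₁) − φ(t;t₀,x₂)‖ ≤ β(‖x₁ − x₂‖, t − t₀)`. -/
theorem ugias_of_flf_classK_decay {n : ℕ} (f : E n → ℝ → E n)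
    (hf : ∀ t, ContDiff ℝ 1 (fun z => f z t))
    (φ : ℝ → ℝ → E n → E n) (Dφ : ℝ → ℝ → E n → (E n →L[ℝ] E n))
    (hφ : IsFlow f φ) (hDφ : FlowDiffInitial f φ Dφ)
    (V : ℝ → E n → E n → ℝ) (hVcont : Continuous fun q : ℝ × E n × E n => V q.1 q.2.1 q.2.2)
    (c₁ c₂ p : ℝ) (hc₁ : 0 < c₁) (hc₂ : 0 < c₂) (hp : 1 ≤ p)
    (hVlow : ∀ t x y, c₁ * ‖y‖ ^ p ≤ V t x y)
    (hVup : ∀ t x y, V t x y ≤ c₂ * ‖y‖ ^ p)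
    (α : ℝ≥0 → ℝ≥0) (hα : ClassK α)
    (hVdec : ∀ (t₀ : ℝ) (x₀ y₀ : E n) (x y : ℝ → E n),
      IsLiftedSolution f t₀ x₀ y₀ x y →
      ∀ t, t₀ ≤ t →
        DiniUpper (fun s => V s (x s) (y s)) t ≤
          -(α (V t (x t) (y t)).toNNReal : ℝ)) :
    ∃ β : ℝ≥0 → ℝ≥0 → ℝ≥0, ClassKL β ∧
      ∀ (t₀ t : ℝ) (x₁ x₂ : E n), t₀ ≤ t →
        ‖φ t t₀ x₁ - φ t t₀ x₂‖ ≤ (β ‖x₁ - x₂‖₊ (t - t₀).toNNReal : ℝ) := by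
  classical
  obtain ⟨hD1, hD2⟩ := hDφ
  have hp0 : (0:ℝ) < p := lt_of_lt_of_le one_pos hp
  have hαpos : ∀ z : ℝ≥0, 0 < z → 0 < α z := by
    intro z hz
    have := hα.2.1 hz
    rwa [hα.2.2] at this
  -- continuity of V along a directional curve
  have hgcont : ∀ (t₀ : ℝ) (x v : E n),
      ContinuousOn (fun s => V s (φ s t₀ x) (Dφ s t₀ x v)) (Set.Ici t₀) := by
    intro t₀ x v
    have hls := hD2 t₀ x v
    have hxc : ContinuousOn (fun s => φ s t₀ x) (Set.Ici t₀) := fun s hs =>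
      ((hls.1.2 s hs).continuousAt).continuousWithinAt
    have hyc : ContinuousOn (fun s => Dφ s t₀ x v) (Set.Ici t₀) := fun s hs =>
      ((hls.2.2 s hs).continuousAt).continuousWithinAt
    exact hVcont.comp_continuousOn (continuousOn_id.prodMk (hxc.prodMk hyc))
  -- V is nonincreasing along directional curves
  have key_anti : ∀ (t₀ : ℝ) (x v : E n) (t₁ t₂ : ℝ), t₀ ≤ t₁ → t₁ ≤ t₂ →
      V t₂ (φ t₂ t₀ x) (Dφ t₂ t₀ x v) ≤ V t₁ (φ t₁ t₀ x) (Dφ t₁ t₀ x v) := by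
    intro t₀ x v t₁ t₂ h1 h2
    have hls := hD2 t₀ x v
    refine dini_antitone (fun s => V s (φ s t₀ x) (Dφ s t₀ x v)) t₀
      (hgcont t₀ x v) ?_ ?_ t₁ t₂ h1 h2
    · intro t ht
      refine le_trans ?_ (hVlow t (φ t t₀ x) (Dφ t t₀ x v))
      positivity
    · intro s hs hpos
      have hd := hVdec t₀ x v (fun t => φ t t₀ x) (fun t => Dφ t t₀ x v) hls s hs
      have h1' : (0:ℝ≥0) < (V s (φ s t₀ x) (Dφ s t₀ x v)).toNNReal :=
        Real.toNNReal_pos.mpr hpos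
      have h2' : (0:ℝ) < (α (V s (φ s t₀ x) (Dφ s t₀ x v)).toNNReal : ℝ) := by
        exact_mod_cast hαpos _ h1'
      calc DiniUpper (fun s => V s (φ s t₀ x) (Dφ s t₀ x v)) s
          ≤ -(α (V s (φ s t₀ x) (Dφ s t₀ x v)).toNNReal : ℝ) := hd
        _ < 0 := by linarith
  -- initial value of the directional curve
  have hIC : ∀ (t₀ : ℝ) (x v : E n), Dφ t₀ t₀ x v = v := fun t₀ x v => (hD2 t₀ x v).2.1
  -- uniform bound
  have key_bound : ∀ (t₀ t : ℝ) (x v : E n), t₀ ≤ t →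
      c₁ * ‖Dφ t t₀ x v‖ ^ p ≤ c₂ * ‖v‖ ^ p := by
    intro t₀ t x v ht
    have h1 := hVlow t (φ t t₀ x) (Dφ t t₀ x v)
    have h2 := key_anti t₀ x v t₀ t le_rfl ht
    have h3 := hVup t₀ (φ t₀ t₀ x) (Dφ t₀ t₀ x v)
    rw [hIC t₀ x v] at h2 h3
    linarith
  -- decay of V
  have key_g : ∀ (t₀ : ℝ) (x v : E n) (ε : ℝ), 0 < ε → ∀ t, t₀ ≤ t →
      c₂ * ‖v‖ ^ p ≤ ε + ((α ε.toNNReal : ℝ)/2) * (t - t₀) →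
      V t (φ t t₀ x) (Dφ t t₀ x v) ≤ ε := by
    intro t₀ x v ε hε t ht hT
    by_contra hcon
    push_neg at hcon
    set g : ℝ → ℝ := fun s => V s (φ s t₀ x) (Dφ s t₀ x v) with hgdef
    set κ : ℝ := (α ε.toNNReal : ℝ)/2 with hκdef
    have hαε : (0:ℝ) < (α ε.toNNReal : ℝ) := by
      exact_mod_cast hαpos _ (Real.toNNReal_pos.mpr hε)
    have hκpos : 0 < κ := by rw [hκdef]; linarith
    have hdec : g t ≤ g t₀ - κ * (t - t₀) := by
      refine dini_decay g t₀ (hgcont t₀ x v) κ t ht ?_ hκpos.le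
      intro s hs1 hs2
      have hge : ε ≤ g s := le_trans hcon.le (key_anti t₀ x v s t hs1 hs2.le)
      have hd := hVdec t₀ x v (fun t => φ t t₀ x) (fun t => Dφ t t₀ x v) (hD2 t₀ x v) s hs1
      have hmono : α ε.toNNReal ≤ α (g s).toNNReal :=
        hα.2.1.monotone (Real.toNNReal_le_toNNReal hge)
      have hmono' : (α ε.toNNReal : ℝ) ≤ (α (g s).toNNReal : ℝ) := by exact_mod_cast hmono
      calc DiniUpper g s ≤ -(α (g s).toNNReal : ℝ) := hd
        _ ≤ -(α ε.toNNReal : ℝ) := by linarith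
        _ < -κ := by rw [hκdef]; linarith
    have hg0 : g t₀ ≤ c₂ * ‖v‖ ^ p := by
      show V t₀ (φ t₀ t₀ x) (Dφ t₀ t₀ x v) ≤ c₂ * ‖v‖ ^ p
      rw [hIC t₀ x v]
      exact hVup t₀ (φ t₀ t₀ x) v
    have : ε < g t := hcon
    nlinarith
  -- conversion of the `c₁ ‖·‖^p` bound
  have norm_le_of : ∀ (z : E n) (b : ℝ), 0 ≤ b → c₁ * ‖z‖ ^ p ≤ c₁ * b ^ p → ‖z‖ ≤ b := by
    intro z b hb hle
    have h1 : ‖z‖ ^ p ≤ b ^ p := le_of_mul_le_mul_left hle hc₁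
    exact (Real.rpow_le_rpow_iff (norm_nonneg z) hb hp0).mp h1
  -- uniform Lipschitz bound
  set Mr : ℝ := (c₂/c₁) ^ p⁻¹ with hMrdef
  have hMr0 : 0 ≤ Mr := Real.rpow_nonneg (by positivity) _
  have hMrp : Mr ^ p = c₂ / c₁ := Real.rpow_inv_rpow (by positivity) hp0.ne'
  have key_M : ∀ (t₀ t : ℝ) (x v : E n), t₀ ≤ t → ‖v‖ ≤ 1 → ‖Dφ t t₀ x v‖ ≤ Mr := by
    intro t₀ t x v ht hv
    refine norm_le_of _ Mr hMr0 ?_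
    have h1 := key_bound t₀ t x v ht
    have h2 : ‖v‖ ^ p ≤ 1 := Real.rpow_le_one (norm_nonneg v) hv hp0.le
    have h3 : c₁ * Mr ^ p = c₂ := by rw [hMrp]; field_simp
    nlinarith
  -- the attenuation function
  set A : ℝ≥0 → Set ℝ≥0 := fun s =>
    {d | ∃ (t₀ t : ℝ) (x v : E n), t₀ ≤ t ∧ (s:ℝ) ≤ t - t₀ ∧ ‖v‖ ≤ 1 ∧ d = ‖Dφ t t₀ x v‖₊}
    with hAdef
  have hAne : ∀ s, (A s).Nonempty := by
    intro s
    exact ⟨‖Dφ (s:ℝ) 0 0 0‖₊, 0, (s:ℝ), 0, 0, s.coe_nonneg, by simp, by simp, rfl⟩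
  have hAbdd : ∀ s, BddAbove (A s) := by
    intro s
    refine ⟨Mr.toNNReal, ?_⟩
    rintro d ⟨t₀, t, x, v, ht, hts, hv, rfl⟩
    rw [← norm_toNNReal]
    exact Real.toNNReal_le_toNNReal (key_M t₀ t x v ht hv)
  set D : ℝ≥0 → ℝ≥0 := fun s => sSup (A s) with hDdef
  have hDanti : Antitone D := by
    intro s s' hss
    refine csSup_le_csSup (hAbdd s) (hAne s') ?_
    rintro d ⟨t₀, t, x, v, ht, hts, hv, rfl⟩
    exact ⟨t₀, t, x, v, ht, le_trans (NNReal.coe_le_coe.mpr hss) hts, hv, rfl⟩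
  have hDle : ∀ (t₀ t : ℝ) (x v : E n), t₀ ≤ t → ‖v‖ ≤ 1 →
      ‖Dφ t t₀ x v‖₊ ≤ D (t - t₀).toNNReal := by
    intro t₀ t x v ht hv
    refine le_csSup (hAbdd _) ?_
    exact ⟨t₀, t, x, v, ht, by rw [Real.coe_toNNReal _ (by linarith)], hv, rfl⟩
  have hDsmall : ∀ a : ℝ≥0, 0 < a → ∀ᶠ s in (atTop : Filter ℝ≥0), D s < a := by
    intro a ha
    set ε : ℝ := c₁ * ((a:ℝ)/2) ^ p with hεdef
    have hε : 0 < ε := by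
      have : (0:ℝ) < (a:ℝ)/2 := by positivity
      positivity
    have hαε : (0:ℝ) < (α ε.toNNReal : ℝ) := by
      exact_mod_cast hαpos _ (Real.toNNReal_pos.mpr hε)
    set T : ℝ := c₂ / ((α ε.toNNReal : ℝ)/2) with hTdef
    refine eventually_atTop.mpr ⟨T.toNNReal, ?_⟩
    intro s hs
    have hDs : D s ≤ ((a:ℝ)/2).toNNReal := by
      refine csSup_le (hAne s) ?_
      rintro d ⟨t₀, t, x, v, ht, hts, hv, rfl⟩
      have hT : T ≤ t - t₀ := by
        calc T ≤ (T.toNNReal : ℝ) := Real.le_coe_toNNReal T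
          _ ≤ (s : ℝ) := NNReal.coe_le_coe.mpr hs
          _ ≤ t - t₀ := hts
      have hVt : V t (φ t t₀ x) (Dφ t t₀ x v) ≤ ε := by
        refine key_g t₀ x v ε hε t ht ?_
        have h2 : ‖v‖ ^ p ≤ 1 := Real.rpow_le_one (norm_nonneg v) hv hp0.le
        have hTα : c₂ = ((α ε.toNNReal : ℝ)/2) * T := by
          rw [hTdef]; field_simp
        nlinarith [mul_le_mul_of_nonneg_left hT (by linarith : (0:ℝ) ≤ (α ε.toNNReal : ℝ)/2)]
      have hnorm : ‖Dφ t t₀ x v‖ ≤ (a:ℝ)/2 := by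
        refine norm_le_of _ _ (by positivity) ?_
        calc c₁ * ‖Dφ t t₀ x v‖ ^ p ≤ V t (φ t t₀ x) (Dφ t t₀ x v) := hVlow _ _ _
          _ ≤ ε := hVt
          _ = c₁ * ((a:ℝ)/2) ^ p := rfl
      rw [← norm_toNNReal]
      exact Real.toNNReal_le_toNNReal hnorm
    refine lt_of_le_of_lt hDs ?_
    have : ((a:ℝ)/2).toNNReal = a/2 := by
      rw [show (a:ℝ)/2 = ((a/2 : ℝ≥0) : ℝ) by push_cast; ring, Real.toNNReal_coe]
    rw [this]
    exact NNReal.half_lt_self ha.ne'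
  have hDtend : Tendsto D atTop (nhds 0) := by
    refine tendsto_order.2 ⟨?_, fun a ha => hDsmall a ha⟩
    intro a ha
    exact absurd ha (by simp)
  -- exponential fudge term
  set e : ℝ≥0 → ℝ≥0 := fun s => (Real.exp (-(s:ℝ))).toNNReal with hedef
  have hepos : ∀ s, 0 < e s := fun s => Real.toNNReal_pos.mpr (Real.exp_pos _)
  have heanti : Antitone e := by
    intro s s' h
    exact Real.toNNReal_le_toNNReal
      (Real.exp_le_exp.mpr (neg_le_neg (NNReal.coe_le_coe.mpr h)))
  have hetend : Tendsto e atTop (nhds 0) := by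
    have h1 : Tendsto (fun s : ℝ≥0 => (s:ℝ)) atTop atTop :=
      NNReal.tendsto_coe_atTop.mpr tendsto_id
    have h2 : Tendsto (fun x : ℝ => Real.exp (-x)) atTop (nhds 0) :=
      Real.tendsto_exp_neg_atTop_nhds_zero
    have h3 := (continuous_real_toNNReal.tendsto 0).comp (h2.comp h1)
    rw [Real.toNNReal_zero] at h3; exact h3
  refine ⟨fun r s => r * (D s + e s), ⟨?_, ?_⟩, ?_⟩
  · intro s
    refine ⟨(continuous_id.mul continuous_const), ?_, ?_⟩
    · intro r r' h
      exact mul_lt_mul_of_pos_right h (lt_of_lt_of_le (hepos s) le_add_self)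
    · exact zero_mul _
  · intro r
    constructor
    · intro s s' h
      exact mul_le_mul_right (add_le_add (hDanti h) (heanti h)) r
    · have : Tendsto (fun s => r * (D s + e s)) atTop (nhds (r * (0 + 0))) :=
        (tendsto_const_nhds : Tendsto (fun _ : ℝ≥0 => r) atTop (nhds r)).mul
          (hDtend.add hetend)
      simpa using this
  · intro t₀ t x₁ x₂ ht
    set s : ℝ≥0 := (t - t₀).toNNReal with hsdef
    have hC : ∀ z : E n, ‖Dφ t t₀ z‖ ≤ (D s : ℝ) := by
      intro z
      refine ContinuousLinearMap.opNorm_le_bound _ (D s).coe_nonneg ?_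
      intro v
      by_cases hv : v = 0
      · simp [hv]
      · set u : E n := ‖v‖⁻¹ • v with hudef
        have hu : ‖u‖ = 1 := by
          rw [hudef, norm_smul, norm_inv, norm_norm,
            inv_mul_cancel₀ (norm_ne_zero_iff.mpr hv)]
        have h1 : ‖Dφ t t₀ z u‖ ≤ (D s : ℝ) := by
          have := hDle t₀ t z u ht hu.le
          exact_mod_cast this
        have h2 : v = ‖v‖ • u := by
          rw [hudef, smul_smul, mul_inv_cancel₀ (norm_ne_zero_iff.mpr hv), one_smul]
        calc ‖Dφ t t₀ z v‖ = ‖Dφ t t₀ z (‖v‖ • u)‖ := by rw [← h2]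
          _ = ‖v‖ * ‖Dφ t t₀ z u‖ := by
            rw [map_smul, norm_smul, norm_norm]
          _ ≤ ‖v‖ * (D s : ℝ) := mul_le_mul_of_nonneg_left h1 (norm_nonneg v)
          _ = (D s : ℝ) * ‖v‖ := mul_comm _ _
    have hmvt : ‖φ t t₀ x₁ - φ t t₀ x₂‖ ≤ (D s : ℝ) * ‖x₁ - x₂‖ := by
      refine Convex.norm_image_sub_le_of_norm_hasFDerivWithin_le
        (fun z _ => (hD1 t t₀ z ht).hasFDerivWithinAt)
        (fun z _ => hC z) convex_univ (Set.mem_univ x₂) (Set.mem_univ x₁)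
    refine le_trans hmvt ?_
    have hcoe : ((‖x₁ - x₂‖₊ * (D s + e s) : ℝ≥0) : ℝ)
        = ‖x₁ - x₂‖ * ((D s : ℝ) + (e s : ℝ)) := by push_cast; ring
    rw [hcoe]
    have he0 : (0:ℝ) ≤ (e s : ℝ) := (e s).coe_nonneg
    nlinarith [norm_nonneg (x₁ - x₂), (D s).coe_nonneg]
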